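/- Let l(σ, p) = -1/(2σ²) - log σ + Σ_{i=1}^J π_i log p_i - log(Σ_{i=1}^J T_i(σ) p_i), where π_i = 1/J and T_i(σ) = Φ(c_i/σ) - Φ(c_{i-1}/σ) with c_i the i/J-quantiles of the standard normal. Then at σ = 1, p_i = 1 for all i: (a) ∂²l/∂σ² = -2; (b) ∂²l/∂σ∂p_i = -(1/√(2π))(c_{i-1} e^{-c_{i-1}²/2} - c_i e^{-c_i²/2}); (c) ∂²l/∂p_i∂p_j = 1/J² for i ≠ j; (d) ∂²l/∂p_i² = 1/J² - 1/J. -/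

import Mathlib

/-- The standard normal CDF. -/
noncomputable def stdNormCDF' (x : ℝ) : ℝ :=
  ∫ t in Set.Iic x, (Real.sqrt (2 * Real.pi))⁻¹ * Real.exp (-t ^ 2 / 2)

lemma gauss_integrable :
    MeasureTheory.Integrable (fun t : ℝ => (Real.sqrt (2 * Real.pi))⁻¹ * Real.exp (-t ^ 2 / 2)) := by
  have h : MeasureTheory.Integrable (fun t : ℝ => Real.exp (-(1/2) * t ^ 2)) :=
    integrable_exp_neg_mul_sq (by norm_num)
  have := h.const_mul (Real.sqrt (2 * Real.pi))⁻¹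
  convert this using 2 with t
  ring_nf

lemma hasDerivAt_stdNormCDF (x : ℝ) :
    HasDerivAt stdNormCDF' ((Real.sqrt (2 * Real.pi))⁻¹ * Real.exp (-x ^ 2 / 2)) x := by
  set f : ℝ → ℝ := fun t => (Real.sqrt (2 * Real.pi))⁻¹ * Real.exp (-t ^ 2 / 2) with hf
  have hcont : Continuous f := by continuity
  have hint := gauss_integrable
  have key : ∀ y : ℝ, stdNormCDF' y = stdNormCDF' 0 + ∫ t in (0:ℝ)..y, f t := by
    intro y
    have := intervalIntegral.integral_Iic_sub_Iic (hint.integrableOn) (hint.integrableOn) (a := 0) (b := y)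
    simp only [stdNormCDF']
    linarith [this]
  have hd : HasDerivAt (fun y => stdNormCDF' 0 + ∫ t in (0:ℝ)..y, f t) (f x) x := by
    have h2 : HasStrictDerivAt (fun u => ∫ t in (0:ℝ)..u, f t) (f x) x :=
      intervalIntegral.integral_hasStrictDerivAt_right
        (hint.intervalIntegrable (a := 0) (b := x))
        (hint.aestronglyMeasurable.stronglyMeasurableAtFilter)
        hcont.continuousAt
    exact h2.hasDerivAt.const_add _
  exact (funext key) ▸ hd

/-- single update sum -/
lemma sum_update_one {J : ℕ} (hJ : 1 ≤ J) (i : Fin J) (s : ℝ) (f : ℝ → ℝ) :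
    ∑ k, f (Function.update (fun _ => (1:ℝ)) i s k) = f s + ((J:ℝ) - 1) * f 1 := by
  have h1 : ∀ k, f (Function.update (fun _ => (1:ℝ)) i s k)
      = Function.update (fun _ : Fin J => f 1) i (f s) k :=
    fun k => Function.apply_update (fun _ x => f x) (fun _ => (1:ℝ)) i s k
  rw [Finset.sum_congr rfl fun k _ => h1 k, Finset.sum_update_of_mem (Finset.mem_univ i),
    Finset.sum_const, nsmul_eq_mul]
  have hcard : (Finset.univ \ {i}).card = J - 1 := by
    rw [Finset.card_sdiff_of_subset (by simp)]; simp
  rw [hcard, Nat.cast_sub hJ]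
  norm_num

/-- double update sum -/
lemma sum_update_two {J : ℕ} (hJ : 2 ≤ J) (i j : Fin J) (hij : i ≠ j) (s u : ℝ) (f : ℝ → ℝ) :
    ∑ k, f (Function.update (Function.update (fun _ => (1:ℝ)) i s) j u k)
      = f u + f s + ((J:ℝ) - 2) * f 1 := by
  have h1 : ∀ k, f (Function.update (Function.update (fun _ => (1:ℝ)) i s) j u k)
      = Function.update (fun k : Fin J => f (Function.update (fun _ => (1:ℝ)) i s k)) j (f u) k :=
    fun k => Function.apply_update (fun _ x => f x) _ j u k
  rw [Finset.sum_congr rfl fun k _ => h1 k, Finset.sum_update_of_mem (Finset.mem_univ j)]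
  have h2 : ∀ k, f (Function.update (fun _ => (1:ℝ)) i s k)
      = Function.update (fun _ : Fin J => f 1) i (f s) k :=
    fun k => Function.apply_update (fun _ x => f x) (fun _ => (1:ℝ)) i s k
  rw [Finset.sum_congr rfl fun k _ => h2 k,
    Finset.sum_update_of_mem (by simp [hij] : i ∈ Finset.univ \ {j}),
    Finset.sum_const, nsmul_eq_mul]
  have hcard : ((Finset.univ \ {j}) \ {i}).card = J - 2 := by
    rw [Finset.card_sdiff_of_subset (by simp [hij]), Finset.card_sdiff_of_subset (by simp)]
    simp; omega
  rw [hcard, Nat.cast_sub hJ]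
  push_cast; ring


/-- For
`l(σ,p) = -1/(2σ²) - log σ + Σ_i (1/J) log p_i - log(Σ_i T_i(σ) p_i)`, where
`T_i(σ) = Φ(c_i/σ) - Φ(c_{i-1}/σ)` and the `c_i` are the `i/J` standard normal
quantiles, at `σ = 1`, `p ≡ 1`:
(a) `∂²l/∂σ² = -2`;
(b) `∂²l/∂σ∂p_i = -(1/√(2π))(c_{i-1} e^{-c_{i-1}²/2} - c_i e^{-c_i²/2})`
    (boundary terms `0`);
(c) `∂²l/∂p_i∂p_j = 1/J²` for `i ≠ j`;
(d) `∂²l/∂p_i² = 1/J² - 1/J`. -/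
theorem stmt13 (J : ℕ) (hJ : 2 ≤ J) (c : ℕ → ℝ)
    (hquant : ∀ i, 1 ≤ i → i ≤ J - 1 → stdNormCDF' (c i) = (i : ℝ) / J)
    (G : ℕ → ℝ → ℝ)
    (hG : ∀ i σ, G i σ = if i = 0 then 0 else if i = J then 1 else stdNormCDF' (c i / σ))
    (T : Fin J → ℝ → ℝ) (hT : ∀ i σ, T i σ = G (i.1 + 1) σ - G i.1 σ)
    (e : ℕ → ℝ)
    (he : ∀ i, e i = if 1 ≤ i ∧ i ≤ J - 1 then c i * Real.exp (-(c i) ^ 2 / 2) else 0)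
    (l : ℝ → (Fin J → ℝ) → ℝ)
    (hl : ∀ σ p, l σ p = -(1 / (2 * σ ^ 2)) - Real.log σ
        + ∑ i, (1 / (J : ℝ)) * Real.log (p i)
        - Real.log (∑ i, T i σ * p i)) :
    (deriv (deriv (fun σ => l σ (fun _ => 1))) 1 = -2) ∧
    (∀ i : Fin J,
      deriv (fun σ => deriv (fun s => l σ (Function.update (fun _ => (1 : ℝ)) i s)) 1) 1
        = -(Real.sqrt (2 * Real.pi))⁻¹ * (e i.1 - e (i.1 + 1))) ∧
    (∀ i j : Fin J, i ≠ j →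
      deriv (fun s =>
          deriv (fun u =>
            l 1 (Function.update (Function.update (fun _ => (1 : ℝ)) i s) j u)) 1) 1
        = 1 / (J : ℝ) ^ 2) ∧
    (∀ i : Fin J,
      deriv (deriv (fun s => l 1 (Function.update (fun _ => (1 : ℝ)) i s))) 1
        = 1 / (J : ℝ) ^ 2 - 1 / J) := by
  have hJ0 : (J : ℝ) ≠ 0 := Nat.cast_ne_zero.mpr (by omega)
  have hG0 : ∀ σ, G 0 σ = 0 := fun σ => by rw [hG]; simp
  have hGJ : ∀ σ, G J σ = 1 := fun σ => by rw [hG]; simp [show J ≠ 0 by omega]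
  have hTsum : ∀ σ, ∑ k : Fin J, T k σ = 1 := by
    intro σ
    rw [Finset.sum_congr rfl fun k _ => hT k σ,
      Fin.sum_univ_eq_sum_range (fun k => G (k + 1) σ - G k σ),
      Finset.sum_range_sub (fun k => G k σ), hGJ, hG0, sub_zero]
  have hG1 : ∀ m, m ≤ J → G m 1 = (m : ℝ) / J := by
    intro m hm
    rcases eq_or_ne m 0 with h0 | h0
    · subst h0; rw [hG0]; simp
    rcases eq_or_ne m J with hJm | hJm
    · subst hJm; rw [hGJ, div_self hJ0]
    · rw [hG, if_neg h0, if_neg hJm, div_one]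
      exact hquant m (by omega) (by omega)
  have hT1 : ∀ k : Fin J, T k 1 = 1 / J := by
    intro k
    rw [hT, hG1 _ k.2.le, hG1 _ (by omega : k.1 + 1 ≤ J)]
    push_cast
    field_simp
    ring
  -- weighted single-update sum
  have hupdT : ∀ (σ : ℝ) (i : Fin J) (s : ℝ),
      ∑ k, T k σ * Function.update (fun _ => (1:ℝ)) i s k = 1 + T i σ * (s - 1) := by
    intro σ i s
    have h1 : ∀ k, T k σ * Function.update (fun _ => (1:ℝ)) i s k
        = Function.update (fun k : Fin J => T k σ * 1) i (T i σ * s) k :=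
      fun k => Function.apply_update (fun k x => T k σ * x) (fun _ => (1:ℝ)) i s k
    rw [Finset.sum_congr rfl fun k _ => h1 k, Finset.sum_update_of_mem (Finset.mem_univ i),
      Finset.sum_sdiff_eq_sub (Finset.subset_univ {i}), Finset.sum_singleton]
    simp only [mul_one]
    rw [hTsum σ]
    ring
  refine ⟨?_, ?_, ?_, ?_⟩
  -- (a)
  · have hfun : (fun σ => l σ (fun _ : Fin J => (1:ℝ))) = fun σ => -(1/(2*σ^2)) - Real.log σ := by
      funext σ
      rw [hl]
      simp [hTsum σ]
    rw [hfun]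
    have hd1 : ∀ σ : ℝ, σ ≠ 0 →
        HasDerivAt (fun x : ℝ => -(1/(2*x^2)) - Real.log x) (1/σ^3 - 1/σ) σ := by
      intro σ hσ
      have h1 : HasDerivAt (fun x : ℝ => 2*x^2) (2*(2*σ)) σ := by
        simpa using ((hasDerivAt_pow 2 σ).const_mul 2)
      have h2 : HasDerivAt (fun x : ℝ => 1/(2*x^2)) (-(2*(2*σ))/(2*σ^2)^2) σ := by
        simpa [one_div] using h1.fun_inv (by positivity)
      have h3 := (h2.fun_neg).fun_sub (Real.hasDerivAt_log hσ)
      refine h3.congr_deriv (Eq.symm ?_)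
      field_simp
    have hEq : deriv (fun x : ℝ => -(1/(2*x^2)) - Real.log x) =ᶠ[nhds 1]
        fun σ => 1/σ^3 - 1/σ := by
      filter_upwards [eventually_ne_nhds one_ne_zero] with σ hσ using (hd1 σ hσ).deriv
    rw [hEq.deriv_eq]
    have ha : HasDerivAt (fun σ : ℝ => σ^3) (3 * 1 ^ 2) 1 := hasDerivAt_pow 3 1
    have hb : HasDerivAt (fun σ : ℝ => 1/σ^3) (-3) 1 := by
      simpa [one_div] using ha.fun_inv (by norm_num)
    have hc : HasDerivAt (fun σ : ℝ => 1/σ) (-1) 1 := by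
      simpa [one_div] using hasDerivAt_inv (one_ne_zero : (1:ℝ) ≠ 0)
    have hfinal : HasDerivAt (fun σ : ℝ => 1/σ^3 - 1/σ) (-2) 1 := by
      refine (hb.fun_sub hc).congr_deriv (Eq.symm ?_)
      norm_num
    exact hfinal.deriv
  -- (b)
  · intro i
    have hbinner : ∀ σ, deriv (fun s => l σ (Function.update (fun _ => (1:ℝ)) i s)) 1
        = 1/J - T i σ := by
      intro σ
      have hfun : (fun s => l σ (Function.update (fun _ => (1:ℝ)) i s))
          = fun s => (-(1/(2*σ^2)) - Real.log σ)
            + (1/(J:ℝ) * Real.log s + ((J:ℝ)-1) * (1/(J:ℝ) * Real.log 1))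
            - Real.log (1 + T i σ * (s - 1)) := by
        funext s
        rw [hl, show (∑ k, 1/(J:ℝ) * Real.log (Function.update (fun _ => (1:ℝ)) i s k))
            = 1/(J:ℝ) * Real.log s + ((J:ℝ)-1) * (1/(J:ℝ) * Real.log 1) from
            sum_update_one (by omega) i s (fun x => 1/(J:ℝ) * Real.log x),
          hupdT σ i s]
      rw [hfun]
      have h1 : HasDerivAt (fun s : ℝ => 1 + T i σ * (s-1)) (T i σ) 1 := by
        simpa using (((hasDerivAt_id (1:ℝ)).sub_const 1).const_mul (T i σ)).const_add 1
      have h2 : HasDerivAt (fun s : ℝ => Real.log (1 + T i σ * (s-1))) (T i σ) 1 := by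
        have := h1.log (by norm_num)
        simpa using this
      have hlog : HasDerivAt (fun s : ℝ => 1/(J:ℝ) * Real.log s + ((J:ℝ)-1) * (1/(J:ℝ) * Real.log 1))
          (1/(J:ℝ)) 1 := by
        simpa using ((Real.hasDerivAt_log one_ne_zero).const_mul (1/(J:ℝ))).add_const
          (((J:ℝ)-1) * (1/(J:ℝ) * Real.log 1))
      exact ((hlog.const_add (-(1/(2*σ^2)) - Real.log σ)).sub h2).deriv
    rw [funext hbinner]
    have hGd : ∀ m, m ≤ J →
        HasDerivAt (fun σ => G m σ) (-(Real.sqrt (2*Real.pi))⁻¹ * e m) 1 := by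
      intro m hm
      rcases eq_or_ne m 0 with h0 | h0
      · subst h0
        rw [funext hG0, he, if_neg (by omega), mul_zero]
        exact hasDerivAt_const (1:ℝ) (0:ℝ)
      rcases eq_or_ne m J with hJm | hJm
      · have hfun : (fun σ => G m σ) = fun _ : ℝ => (1:ℝ) :=
          funext fun σ => by rw [hJm]; exact hGJ σ
        rw [hfun, he, if_neg (by omega), mul_zero]
        exact hasDerivAt_const (1:ℝ) (1:ℝ)
      · have hGm : (fun σ => G m σ) = fun σ => stdNormCDF' (c m / σ) := by
          funext σ; rw [hG, if_neg h0, if_neg hJm]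
        rw [hGm]
        have hin : HasDerivAt (fun σ : ℝ => c m / σ) (c m * (-(1/1^2))) 1 := by
          simpa [div_eq_mul_inv] using (hasDerivAt_inv one_ne_zero).const_mul (c m)
        have := (hasDerivAt_stdNormCDF (c m / 1)).comp 1 hin
        refine this.congr_deriv (Eq.symm ?_)
        rw [he, if_pos ⟨by omega, by omega⟩]
        norm_num
        ring
    have hTfun : (fun σ => (1:ℝ)/J - T i σ)
        = fun σ => (1:ℝ)/J - (G (i.1+1) σ - G i.1 σ) :=
      funext fun σ => by rw [hT]
    rw [hTfun]
    have hTd : HasDerivAt (fun σ => (1:ℝ)/J - (G (i.1+1) σ - G i.1 σ))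
        (-(Real.sqrt (2*Real.pi))⁻¹ * (e i.1 - e (i.1+1))) 1 := by
      refine (((hGd (i.1+1) (by omega)).fun_sub (hGd i.1 i.2.le)).const_sub ((1:ℝ)/J)).congr_deriv (Eq.symm ?_)
      ring
    exact hTd.deriv
  -- (c)
  · intro i j hij
    have hcinner : ∀ s : ℝ, s + (J:ℝ) - 1 ≠ 0 →
        deriv (fun u => l 1 (Function.update (Function.update (fun _ => (1:ℝ)) i s) j u)) 1
          = 1/(J:ℝ) - (s + (J:ℝ) - 1)⁻¹ := by
      intro s hs
      have hfun : (fun u => l 1 (Function.update (Function.update (fun _ => (1:ℝ)) i s) j u))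
          = fun u => (-(1/(2*(1:ℝ)^2)) - Real.log 1)
            + (1/(J:ℝ) * Real.log u + 1/(J:ℝ) * Real.log s + ((J:ℝ)-2) * (1/(J:ℝ) * Real.log 1))
            - Real.log ((1/(J:ℝ))*u + (1/(J:ℝ))*s + ((J:ℝ)-2)*((1/(J:ℝ))*1)) := by
        funext u
        rw [hl,
          show (∑ k, 1/(J:ℝ) * Real.log
              (Function.update (Function.update (fun _ => (1:ℝ)) i s) j u k))
            = 1/(J:ℝ) * Real.log u + 1/(J:ℝ) * Real.log s + ((J:ℝ)-2) * (1/(J:ℝ) * Real.log 1)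
            from sum_update_two hJ i j hij s u (fun x => 1/(J:ℝ) * Real.log x),
          Finset.sum_congr rfl fun k _ => by rw [hT1 k],
          show (∑ k, 1/(J:ℝ) *
              (Function.update (Function.update (fun _ => (1:ℝ)) i s) j u k))
            = (1/(J:ℝ))*u + (1/(J:ℝ))*s + ((J:ℝ)-2)*((1/(J:ℝ))*1)
            from sum_update_two hJ i j hij s u (fun x => 1/(J:ℝ) * x)]
      rw [hfun]
      have hDval : (1/(J:ℝ))*1 + (1/(J:ℝ))*s + ((J:ℝ)-2)*((1/(J:ℝ))*1) = (s + J - 1)/J := by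
        field_simp; ring
      have hD : HasDerivAt (fun u : ℝ => (1/(J:ℝ))*u + (1/(J:ℝ))*s + ((J:ℝ)-2)*((1/(J:ℝ))*1))
          (1/(J:ℝ)) 1 := by
        simpa using ((((hasDerivAt_id (1:ℝ)).const_mul (1/(J:ℝ))).add_const
          ((1/(J:ℝ))*s)).add_const (((J:ℝ)-2)*((1/(J:ℝ))*1)))
      have hDne : (1/(J:ℝ))*1 + (1/(J:ℝ))*s + ((J:ℝ)-2)*((1/(J:ℝ))*1) ≠ 0 := by
        rw [hDval]; exact div_ne_zero hs hJ0
      have hlogD := hD.log hDne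
      have hlogu : HasDerivAt (fun u : ℝ => 1/(J:ℝ) * Real.log u + 1/(J:ℝ) * Real.log s
          + ((J:ℝ)-2) * (1/(J:ℝ) * Real.log 1)) (1/(J:ℝ)) 1 := by
        simpa using (((Real.hasDerivAt_log one_ne_zero).const_mul (1/(J:ℝ))).add_const
          (1/(J:ℝ) * Real.log s)).add_const (((J:ℝ)-2) * (1/(J:ℝ) * Real.log 1))
      rw [((hlogu.const_add (-(1/(2*(1:ℝ)^2)) - Real.log 1)).fun_sub hlogD).deriv]
      rw [hDval]
      congr 1
      rw [div_div_div_cancel_right₀]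
      · exact one_div _
      · exact hJ0
    -- outer derivative
    have hev : ∀ᶠ s in nhds (1:ℝ), s + (J:ℝ) - 1 ≠ 0 := by
      have hc : ContinuousAt (fun s : ℝ => s + (J:ℝ) - 1) 1 := by fun_prop
      exact hc.eventually_ne (by rw [add_sub_cancel_left]; exact hJ0)
    have hEq : (fun s => deriv
          (fun u => l 1 (Function.update (Function.update (fun _ => (1:ℝ)) i s) j u)) 1)
        =ᶠ[nhds 1] fun s => 1/(J:ℝ) - (s + (J:ℝ) - 1)⁻¹ := by
      filter_upwards [hev] with s hs using hcinner s hs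
    rw [hEq.deriv_eq]
    have hw : HasDerivAt (fun s : ℝ => s + (J:ℝ) - 1) 1 1 := by
      simpa using ((hasDerivAt_id (1:ℝ)).add_const (J:ℝ)).sub_const 1
    have hwne : (1:ℝ) + (J:ℝ) - 1 ≠ 0 := by rw [add_sub_cancel_left]; exact hJ0
    have hfin := (hw.fun_inv hwne).const_sub (1/(J:ℝ))
    rw [hfin.deriv, add_sub_cancel_left]
    field_simp
  -- (d)
  · intro i
    have hFfun : (fun s => l 1 (Function.update (fun _ => (1:ℝ)) i s))
        = fun s => (-(1/(2*(1:ℝ)^2)) - Real.log 1)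
          + (1/(J:ℝ) * Real.log s + ((J:ℝ)-1) * (1/(J:ℝ) * Real.log 1))
          - Real.log ((1/(J:ℝ))*s + ((J:ℝ)-1)*((1/(J:ℝ))*1)) := by
      funext s
      rw [hl,
        show (∑ k, 1/(J:ℝ) * Real.log (Function.update (fun _ => (1:ℝ)) i s k))
          = 1/(J:ℝ) * Real.log s + ((J:ℝ)-1) * (1/(J:ℝ) * Real.log 1) from
          sum_update_one (by omega) i s (fun x => 1/(J:ℝ) * Real.log x),
        Finset.sum_congr rfl fun k _ => by rw [hT1 k],
        show (∑ k, 1/(J:ℝ) * (Function.update (fun _ => (1:ℝ)) i s k))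
          = (1/(J:ℝ))*s + ((J:ℝ)-1)*((1/(J:ℝ))*1) from
          sum_update_one (by omega) i s (fun x => 1/(J:ℝ) * x)]
    rw [hFfun]
    have hvval : ∀ s : ℝ, (1/(J:ℝ))*s + ((J:ℝ)-1)*((1/(J:ℝ))*1) = (s + (J:ℝ) - 1)/(J:ℝ) := by
      intro s; field_simp; ring
    have hd : ∀ s : ℝ, s ≠ 0 → s + (J:ℝ) - 1 ≠ 0 →
        HasDerivAt (fun s => (-(1/(2*(1:ℝ)^2)) - Real.log 1)
          + (1/(J:ℝ) * Real.log s + ((J:ℝ)-1) * (1/(J:ℝ) * Real.log 1))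
          - Real.log ((1/(J:ℝ))*s + ((J:ℝ)-1)*((1/(J:ℝ))*1)))
          (1/(J:ℝ) * s⁻¹ - (s + (J:ℝ) - 1)⁻¹) s := by
      intro s hs0 hs1
      have hv : HasDerivAt (fun x : ℝ => (1/(J:ℝ))*x + ((J:ℝ)-1)*((1/(J:ℝ))*1)) (1/(J:ℝ)) s := by
        simpa using ((hasDerivAt_id s).const_mul (1/(J:ℝ))).add_const (((J:ℝ)-1)*((1/(J:ℝ))*1))
      have hvne : (1/(J:ℝ))*s + ((J:ℝ)-1)*((1/(J:ℝ))*1) ≠ 0 := by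
        rw [hvval]; exact div_ne_zero hs1 hJ0
      have hlogv := hv.log hvne
      have hlogs : HasDerivAt (fun x : ℝ => 1/(J:ℝ) * Real.log x
          + ((J:ℝ)-1) * (1/(J:ℝ) * Real.log 1)) (1/(J:ℝ) * s⁻¹) s :=
        ((Real.hasDerivAt_log hs0).const_mul (1/(J:ℝ))).add_const _
      have htot := (hlogs.const_add (-(1/(2*(1:ℝ)^2)) - Real.log 1)).fun_sub hlogv
      refine htot.congr_deriv (Eq.symm ?_)
      rw [hvval]
      congr 1
      rw [eq_comm, div_div_div_cancel_right₀]
      · exact one_div _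
      · exact hJ0
    have hev0 : ∀ᶠ s in nhds (1:ℝ), s ≠ 0 := eventually_ne_nhds one_ne_zero
    have hev1 : ∀ᶠ s in nhds (1:ℝ), s + (J:ℝ) - 1 ≠ 0 := by
      have hc : ContinuousAt (fun s : ℝ => s + (J:ℝ) - 1) 1 := by fun_prop
      exact hc.eventually_ne (by rw [add_sub_cancel_left]; exact hJ0)
    have hEq : deriv (fun s => (-(1/(2*(1:ℝ)^2)) - Real.log 1)
          + (1/(J:ℝ) * Real.log s + ((J:ℝ)-1) * (1/(J:ℝ) * Real.log 1))
          - Real.log ((1/(J:ℝ))*s + ((J:ℝ)-1)*((1/(J:ℝ))*1)))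
        =ᶠ[nhds 1] fun s => 1/(J:ℝ) * s⁻¹ - (s + (J:ℝ) - 1)⁻¹ := by
      filter_upwards [hev0, hev1] with s hs0 hs1 using (hd s hs0 hs1).deriv
    rw [hEq.deriv_eq]
    have h1 : HasDerivAt (fun s : ℝ => 1/(J:ℝ) * s⁻¹) (1/(J:ℝ) * (-((1:ℝ)^2)⁻¹)) 1 :=
      (hasDerivAt_inv one_ne_zero).const_mul (1/(J:ℝ))
    have hw : HasDerivAt (fun s : ℝ => s + (J:ℝ) - 1) 1 1 := by
      simpa using ((hasDerivAt_id (1:ℝ)).add_const (J:ℝ)).sub_const 1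
    have hwne : (1:ℝ) + (J:ℝ) - 1 ≠ 0 := by rw [add_sub_cancel_left]; exact hJ0
    have h2 := hw.fun_inv hwne
    rw [(h1.fun_sub h2).deriv, add_sub_cancel_left]
    field_simp
    ring
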